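/- Suppose C is a Krull-Schmidt, Hom-finite, k-linear triangulated category with Auslander-Reiten triangles in which every indecomposable object has infinite shift orbit (M[i] ≇ M[j] for i ≠ j). Then the bilinear form ⟨[C],[D]⟩ = dim Hom(C,D) on the free abelian group A(C) on isomorphism classes of indecomposable objects is non-degenerate: if x ∈ A(C) satisfies ⟨x, [D]⟩ = 0 for all indecomposables D, then x = 0. -/

import Mathlib

open CategoryTheory Limits Pretriangulated Module
open scoped Classical
set_option linter.unusedSectionVars false
set_option maxHeartbeats 1000000

noncomputable section

universe v u

variable {k : Type} [Field k] [IsAlgClosed k]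
variable {C : Type u} [Category.{v} C] [Preadditive C] [CategoryTheory.Linear k C]
  [HasZeroObject C] [HasBinaryBiproducts C] [HasFiniteBiproducts C]
  [HasShift C ℤ] [∀ n : ℤ, (CategoryTheory.shiftFunctor C n).Additive]
  [Pretriangulated C]
  [∀ X Y : C, FiniteDimensional k (X ⟶ Y)]

/-- An object is indecomposable if it is nonzero and admits no nontrivial
direct sum decomposition. -/
def Indec (W : C) : Prop :=
  ¬ IsZero W ∧ ∀ A B : C, Nonempty (W ≅ A ⊞ B) → IsZero A ∨ IsZero B

/-- The Krull-Schmidt property: indecomposables have local endomorphism rings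
and every object is a finite direct sum of indecomposables. -/
def KrullSchmidt : Prop :=
  (∀ W : C, Indec W → ∀ f : W ⟶ W, IsIso f ∨ IsIso (𝟙 W - f)) ∧
  (∀ X : C, ∃ (n : ℕ) (f : Fin n → C), (∀ i, Indec (f i)) ∧ Nonempty (X ≅ ⨁ f))

/-- An Auslander-Reiten triangle: a distinguished triangle with indecomposable
end terms, nonzero connecting map, such that every non-split-epi to the third
object factors through the middle (equivalently every non-split-mono out of the
first object factors through the middle). -/
def IsARTriangle (T : Triangle C) : Prop :=
  (T ∈ distTriang C) ∧ Indec T.obj₁ ∧ Indec T.obj₃ ∧ T.mor₃ ≠ 0 ∧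
  (∀ (W : C) (f : W ⟶ T.obj₃), (¬ ∃ s : T.obj₃ ⟶ W, s ≫ f = 𝟙 T.obj₃) →
    ∃ g : W ⟶ T.obj₂, g ≫ T.mor₂ = f) ∧
  (∀ (W : C) (f : T.obj₁ ⟶ W), (¬ ∃ s : W ⟶ T.obj₁, f ≫ s = 𝟙 T.obj₁) →
    ∃ g : T.obj₂ ⟶ W, T.mor₁ ≫ g = f)

/-- The set of isomorphism classes of indecomposable objects of `C`. -/
abbrev IndecCls (C : Type u) [Category.{v} C] [Preadditive C] [HasZeroObject C]
    [HasBinaryBiproducts C] : Type u :=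
  {x : _root_.Quotient (CategoryTheory.isIsomorphicSetoid C) // ∃ W : C, Indec W ∧ ⟦W⟧ = x}

/-- The Grothendieck group `A(C)`: the free abelian group on the isomorphism
classes of indecomposable objects of `C`, with only direct-sum relations. -/
abbrev GreenGroup (C : Type u) [Category.{v} C] [Preadditive C] [HasZeroObject C]
    [HasBinaryBiproducts C] : Type u :=
  FreeAbelianGroup (IndecCls C)

/-- The class `[W] ∈ A(C)` of an indecomposable object (and `0` otherwise). -/
def cls (W : C) : GreenGroup C :=
  if h : Indec W then FreeAbelianGroup.of (⟨⟦W⟧, W, h, rfl⟩ : IndecCls C) else 0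

/-- The bilinear form on `A(C)` extending `⟨[C],[D]⟩ = dim Hom(C,D)`. -/
def homPairing : GreenGroup C →+ GreenGroup C →+ ℤ :=
  FreeAbelianGroup.lift fun s : IndecCls C =>
    FreeAbelianGroup.lift fun t : IndecCls C =>
      (finrank k (Quotient.out (Subtype.val s) ⟶ Quotient.out (Subtype.val t)) : ℤ)

lemma indec_of_iso {W W' : C} (e : W ≅ W') (h : Indec W) : Indec W' := by
  refine ⟨fun hz => h.1 (hz.of_iso e), fun A B ⟨e'⟩ => h.2 A B ⟨e.trans e'⟩⟩

lemma isZero_of_shift_isZero {W : C} (n : ℤ) (h : IsZero (W⟦n⟧)) : IsZero W := by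
  rw [IsZero.iff_id_eq_zero] at h ⊢
  apply (shiftFunctor C n).map_injective
  rw [(shiftFunctor C n).map_id, (shiftFunctor C n).map_zero, h]

lemma indec_shift {W : C} (h : Indec W) (n : ℤ) : Indec (W⟦n⟧) := by
  constructor
  · intro hz
    exact h.1 (isZero_of_shift_isZero n hz)
  · rintro A B ⟨e⟩
    haveI := preservesBinaryBiproduct_of_preservesBiproduct (shiftFunctor C (-n)) A B
    have e2 : W ≅ A⟦-n⟧ ⊞ B⟦-n⟧ :=
      (shiftShiftNeg W n).symm ≪≫ (shiftFunctor C (-n)).mapIso e ≪≫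
        (shiftFunctor C (-n)).mapBiprod A B
    rcases h.2 _ _ ⟨e2⟩ with hz | hz
    · exact Or.inl (isZero_of_shift_isZero (-n) hz)
    · exact Or.inr (isZero_of_shift_isZero (-n) hz)

lemma isIso_of_splitEpi {W Z : C} (hZ : ¬ IsZero Z)
    (hloc : ∀ g : W ⟶ W, IsIso g ∨ IsIso (𝟙 W - g))
    (f : W ⟶ Z) (s : Z ⟶ W) (hs : s ≫ f = 𝟙 Z) : IsIso f := by
  set e : W ⟶ W := f ≫ s with he_def
  have he : e ≫ e = e := by
    simp only [he_def, Category.assoc]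
    rw [reassoc_of% hs]
  rcases hloc e with h | h
  · have h1 : e = 𝟙 W := by
      rw [← cancel_epi e, he, Category.comp_id]
    exact ⟨s, by rw [← he_def, h1], hs⟩
  · have h2 : (𝟙 W - e) ≫ (𝟙 W - e) = (𝟙 W - e) ≫ 𝟙 W := by
      simp [Preadditive.sub_comp, Preadditive.comp_sub, he]
    have h3 : e = 0 := by
      have h4 := (cancel_epi (𝟙 W - e)).mp h2
      exact sub_eq_self.mp h4
    exfalso
    apply hZ
    rw [IsZero.iff_id_eq_zero]
    calc 𝟙 Z = (s ≫ f) ≫ (s ≫ f) := by rw [hs]; simp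
    _ = s ≫ e ≫ f := by simp [he_def]
    _ = 0 := by rw [h3]; simp


lemma exists_smul_nonIso {W Z' : C} (hW : Indec W) (e : W ≅ Z') (f : W ⟶ Z') :
    ∃ c : k, ¬ IsIso (f - c • e.hom) := by
  have hnt : Nontrivial (W ⟶ W) :=
    ⟨⟨𝟙 W, 0, fun h => hW.1 ((IsZero.iff_id_eq_zero W).mpr h)⟩⟩
  set a : W ⟶ W := f ≫ e.inv with ha
  obtain ⟨c, hc⟩ := Module.End.exists_eigenvalue
    (Linear.rightComp k W a : Module.End k (W ⟶ W))
  obtain ⟨b, hb⟩ := hc.exists_hasEigenvector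
  have hb0 : b ≠ 0 := hb.right
  have hba : b ≫ a = c • b := hb.apply_eq_smul
  have hnia : ¬ IsIso (a - c • 𝟙 W) := by
    intro hi
    apply hb0
    have hz : b ≫ (a - c • 𝟙 W) = 0 := by
      rw [Preadditive.comp_sub, hba, Linear.comp_smul, Category.comp_id, sub_self]
    calc b = (b ≫ (a - c • 𝟙 W)) ≫ inv (a - c • 𝟙 W) := by
          rw [Category.assoc, IsIso.hom_inv_id, Category.comp_id]
    _ = 0 := by rw [hz]; simp
  refine ⟨c, fun hi => hnia ?_⟩
  have key : f - c • e.hom = (a - c • 𝟙 W) ≫ e.hom := by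
    rw [Preadditive.sub_comp, ha, Category.assoc, e.inv_hom_id, Category.comp_id,
      Linear.smul_comp, Category.id_comp]
  have h2 : a - c • 𝟙 W = (f - c • e.hom) ≫ e.inv := by
    rw [key, Category.assoc, e.hom_inv_id, Category.comp_id]
  rw [h2]
  infer_instance

lemma rank_rightComp {W Z' V : C} (hW : Indec W)
    (h : Z' ⟶ V) (hh : h ≠ 0)
    (hfac : ∀ f : W ⟶ Z', ¬ IsIso f → f ≫ h = 0) :
    (finrank k (LinearMap.range (Linear.rightComp k W h)) : ℤ) =
      (if Nonempty (W ≅ Z') then 1 else 0) := by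
  by_cases hiso : Nonempty (W ≅ Z')
  · rw [if_pos hiso]
    obtain ⟨e⟩ := hiso
    have hne : e.hom ≫ h ≠ 0 := by
      intro h0
      apply hh
      calc h = e.inv ≫ (e.hom ≫ h) := by simp
      _ = 0 := by rw [h0]; simp
    have hrange : LinearMap.range (Linear.rightComp k W h) = Submodule.span k {e.hom ≫ h} := by
      apply le_antisymm
      · rintro y ⟨f, rfl⟩
        obtain ⟨c, hc⟩ := exists_smul_nonIso (k := k) hW e f
        have hv : (Linear.rightComp k W h) f = c • (e.hom ≫ h) := by
          have hdec : f = c • e.hom + (f - c • e.hom) := by abel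
          show f ≫ h = c • (e.hom ≫ h)
          rw [hdec, Preadditive.add_comp, hfac _ hc, add_zero, Linear.smul_comp]
        rw [hv]
        exact Submodule.smul_mem _ _ (Submodule.mem_span_singleton_self _)
      · rw [Submodule.span_le, Set.singleton_subset_iff]
        exact ⟨e.hom, rfl⟩
    rw [hrange, finrank_span_singleton hne]
    norm_num
  · rw [if_neg hiso]
    have hz : ∀ f : W ⟶ Z', f ≫ h = 0 := fun f =>
      hfac f (fun hi => hiso ⟨asIso f⟩)
    have hr : Linear.rightComp k W h = 0 := by
      ext f; exact hz f
    rw [hr, LinearMap.range_zero, finrank_bot]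
    rfl



lemma nonIso_comp_mor₃ (hKS1 : ∀ W : C, Indec W → ∀ f : W ⟶ W, IsIso f ∨ IsIso (𝟙 W - f))
    {T : Triangle C} (hT : IsARTriangle T) {W : C} (hW : Indec W)
    (f : W ⟶ T.obj₃) (hf : ¬ IsIso f) : f ≫ T.mor₃ = 0 := by
  have hns : ¬ ∃ s : T.obj₃ ⟶ W, s ≫ f = 𝟙 T.obj₃ := by
    rintro ⟨s, hs⟩
    exact hf (isIso_of_splitEpi hT.2.2.1.1 (hKS1 W hW) f s hs)
  obtain ⟨g, hg⟩ := hT.2.2.2.2.1 W f hns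
  rw [← hg, Category.assoc, comp_distTriang_mor_zero₂₃ T hT.1, comp_zero]

lemma nonIso_comp_invRotate_mor₁
    (hKS1 : ∀ W : C, Indec W → ∀ f : W ⟶ W, IsIso f ∨ IsIso (𝟙 W - f))
    {T : Triangle C} (hT : IsARTriangle T) {W : C} (hW : Indec W)
    (f : W ⟶ T.obj₃⟦(-1:ℤ)⟧) (hf : ¬ IsIso f) : f ≫ T.invRotate.mor₁ = 0 := by
  set e : shiftFunctor C (-1:ℤ) ⋙ shiftFunctor C (1:ℤ) ≅ 𝟭 C := (shiftEquiv C (1:ℤ)).counitIso with he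
  set g : W⟦(1:ℤ)⟧ ⟶ T.obj₃ := f⟦(1:ℤ)⟧' ≫ e.hom.app T.obj₃ with hg
  have hgni : ¬ IsIso g := by
    intro hig
    apply hf
    have hf1 : f⟦(1:ℤ)⟧' = g ≫ e.inv.app T.obj₃ := by
      rw [hg, Category.assoc, Iso.hom_inv_id_app]
      simp
    have : IsIso (f⟦(1:ℤ)⟧') := by rw [hf1]; infer_instance
    exact isIso_of_reflects_iso f (shiftFunctor C (1:ℤ))
  have hns : ¬ ∃ s : T.obj₃ ⟶ W⟦(1:ℤ)⟧, s ≫ g = 𝟙 T.obj₃ := by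
    rintro ⟨s, hs⟩
    exact hgni (isIso_of_splitEpi hT.2.2.1.1 (hKS1 _ (indec_shift hW 1)) g s hs)
  obtain ⟨g₂, hg₂⟩ := hT.2.2.2.2.1 _ g hns
  have hgm : g ≫ T.mor₃ = 0 := by
    rw [← hg₂, Category.assoc, comp_distTriang_mor_zero₂₃ T hT.1, comp_zero]
  have hmain : f ≫ T.mor₃⟦(-1:ℤ)⟧' = 0 := by
    apply (shiftFunctor C (1:ℤ)).map_injective
    rw [Functor.map_comp, Functor.map_zero]
    have hnat : (shiftFunctor C (1:ℤ)).map ((shiftFunctor C (-1:ℤ)).map T.mor₃) ≫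
        e.hom.app ((shiftFunctor C (1:ℤ)).obj T.obj₁) = e.hom.app T.obj₃ ≫ T.mor₃ :=
      e.hom.naturality T.mor₃
    rw [← cancel_mono (e.hom.app ((shiftFunctor C (1:ℤ)).obj T.obj₁)), Category.assoc,
      hnat, zero_comp, ← Category.assoc, ← hg, hgm]
  show f ≫ ((-(T.mor₃⟦(-1:ℤ)⟧') ≫ (shiftFunctorCompIsoId C (1:ℤ) (-1) (by omega)).hom.app T.obj₁ :
    _ ⟶ T.obj₁)) = 0
  rw [Preadditive.comp_neg, neg_eq_zero, ← Category.assoc, hmain, zero_comp]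


lemma dim_formula (hKS1 : ∀ W : C, Indec W → ∀ f : W ⟶ W, IsIso f ∨ IsIso (𝟙 W - f))
    {T : Triangle C} (hT : IsARTriangle T) {W : C} (hW : Indec W) :
    (finrank k (W ⟶ T.obj₁) : ℤ) - finrank k (W ⟶ T.obj₂) + finrank k (W ⟶ T.obj₃) =
      (if Nonempty (W ≅ T.obj₃) then 1 else 0) +
      (if Nonempty (W ≅ T.obj₃⟦(-1:ℤ)⟧) then 1 else 0) := by
  set u := Linear.rightComp k W T.mor₁ with hu
  set v := Linear.rightComp k W T.mor₂ with hv
  set d := Linear.rightComp k W T.mor₃ with hd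
  set L := Linear.rightComp k W T.invRotate.mor₁ with hL'
  have hVU : LinearMap.ker v = LinearMap.range u := by
    ext f
    simp only [LinearMap.mem_ker, LinearMap.mem_range, hv, hu, Linear.rightComp_apply]
    constructor
    · intro hf
      obtain ⟨g, hg⟩ := Triangle.coyoneda_exact₂ T hT.1 f hf
      exact ⟨g, hg.symm⟩
    · rintro ⟨g, rfl⟩
      rw [Category.assoc, comp_distTriang_mor_zero₁₂ T hT.1, comp_zero]
  have hDV : LinearMap.ker d = LinearMap.range v := by
    ext f
    simp only [LinearMap.mem_ker, LinearMap.mem_range, hv, hd, Linear.rightComp_apply]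
    constructor
    · intro hf
      obtain ⟨g, hg⟩ := Triangle.coyoneda_exact₃ T hT.1 f hf
      exact ⟨g, hg.symm⟩
    · rintro ⟨g, rfl⟩
      rw [Category.assoc, comp_distTriang_mor_zero₂₃ T hT.1, comp_zero]
  have hUL : LinearMap.ker u = LinearMap.range L := by
    ext f
    simp only [LinearMap.mem_ker, LinearMap.mem_range, hu, hL', Linear.rightComp_apply]
    constructor
    · intro hf
      obtain ⟨g, hg⟩ := Triangle.coyoneda_exact₂ T.invRotate
        (inv_rot_of_distTriang T hT.1) f hf
      exact ⟨g, hg.symm⟩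
    · rintro ⟨g, rfl⟩
      have h12 := comp_distTriang_mor_zero₁₂ T.invRotate (inv_rot_of_distTriang T hT.1)
      rw [Triangle.invRotate_mor₂] at h12
      show (g ≫ T.invRotate.mor₁) ≫ T.mor₁ = 0
      exact (Category.assoc _ _ _).trans ((congrArg (fun q => g ≫ q) h12).trans comp_zero)
  have hinv_ne : T.invRotate.mor₁ ≠ 0 := by
    intro h0
    apply hT.2.2.2.1
    apply (shiftFunctor C (-1:ℤ)).map_injective
    rw [Functor.map_zero]
    have h1 : (-(T.mor₃⟦(-1:ℤ)⟧') ≫ (shiftFunctorCompIsoId C (1:ℤ) (-1) (by omega)).hom.app T.obj₁ :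
        _ ⟶ T.obj₁) = 0 := h0
    simpa using h1
  have hD : (finrank k (LinearMap.range d) : ℤ) = if Nonempty (W ≅ T.obj₃) then 1 else 0 :=
    rank_rightComp hW T.mor₃ hT.2.2.2.1 (fun f hf => nonIso_comp_mor₃ hKS1 hT hW f hf)
  have hL : (finrank k (LinearMap.range L) : ℤ) =
      if Nonempty (W ≅ T.obj₃⟦(-1:ℤ)⟧) then 1 else 0 :=
    rank_rightComp hW T.invRotate.mor₁ hinv_ne
      (fun f hf => nonIso_comp_invRotate_mor₁ hKS1 hT hW f hf)
  have h1 := LinearMap.finrank_range_add_finrank_ker u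
  have h2 := LinearMap.finrank_range_add_finrank_ker v
  have h3 := LinearMap.finrank_range_add_finrank_ker d
  have e1 : finrank k (LinearMap.ker v) = finrank k (LinearMap.range u) := by rw [hVU]
  have e2 : finrank k (LinearMap.ker d) = finrank k (LinearMap.range v) := by rw [hDV]
  have e3 : finrank k (LinearMap.ker u) = finrank k (LinearMap.range L) := by rw [hUL]; rfl
  rw [← hD, ← hL]
  omega

def homBiproductEquiv (W : C) {n : ℕ} (f : Fin n → C) : (W ⟶ ⨁ f) ≃ₗ[k] Π i, (W ⟶ f i) where
  toFun g := fun i => g ≫ biproduct.π f i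
  map_add' g h := by funext i; simp [Preadditive.add_comp]
  map_smul' c g := by funext i; simp [Linear.smul_comp]
  invFun h := biproduct.lift h
  left_inv g := by apply biproduct.hom_ext; intro i; simp
  right_inv h := by funext i; simp

lemma finrank_hom_biproduct (W : C) {n : ℕ} (f : Fin n → C) :
    finrank k (W ⟶ ⨁ f) = ∑ i, finrank k (W ⟶ f i) := by
  rw [LinearEquiv.finrank_eq (homBiproductEquiv (k := k) W f), Module.finrank_pi_fintype]


def clsOf (W : C) (h : Indec W) : IndecCls C := ⟨⟦W⟧, W, h, rfl⟩

lemma clsOf_eq_iff {W W' : C} (h : Indec W) (h' : Indec W') :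
    clsOf W h = clsOf W' h' ↔ Nonempty (W ≅ W') := by
  constructor
  · intro he
    exact Quotient.exact (congrArg Subtype.val he)
  · rintro ⟨e⟩
    exact Subtype.ext (Quotient.sound ⟨e⟩)

lemma out_iso (s : IndecCls C) {W : C} (hW : (⟦W⟧ : _root_.Quotient (CategoryTheory.isIsomorphicSetoid C)) = s.val) :
    Nonempty (Quotient.out s.val ≅ W) :=
  Quotient.exact ((Quotient.out_eq s.val).trans hW.symm)

lemma out_indec (s : IndecCls C) : Indec (Quotient.out s.val) := by
  obtain ⟨W₀, hW₀, hq⟩ := s.2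
  obtain ⟨e⟩ := out_iso s hq
  exact indec_of_iso e.symm hW₀


lemma cls_eq (W : C) (h : Indec W) : cls W = FreeAbelianGroup.of (clsOf W h) := dif_pos h

lemma homPairing_of_of (s t : IndecCls C) :
    homPairing (k := k) (FreeAbelianGroup.of s) (FreeAbelianGroup.of t) =
      finrank k (Quotient.out s.val ⟶ Quotient.out t.val) := by
  rw [homPairing, FreeAbelianGroup.lift_apply_of, FreeAbelianGroup.lift_apply_of]

lemma homPairing_of_cls (s : IndecCls C) (D : C) (hD : Indec D) :
    homPairing (k := k) (FreeAbelianGroup.of s) (cls D) =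
      finrank k (Quotient.out s.val ⟶ D) := by
  rw [cls_eq D hD, homPairing_of_of]
  obtain ⟨e⟩ := out_iso (clsOf D hD) (rfl : _ = _)
  exact congrArg _ (LinearEquiv.finrank_eq (Linear.homCongr k (Iso.refl _) e))

lemma coeff_of (s t : IndecCls C) :
    FreeAbelianGroup.coeff t (FreeAbelianGroup.of s) = if s = t then 1 else 0 := by
  show (FreeAbelianGroup.toFinsupp (FreeAbelianGroup.of s)) t = _
  rw [FreeAbelianGroup.toFinsupp_of, Finsupp.single_apply]

lemma pairing_zhat (hKS1 : ∀ W : C, Indec W → ∀ f : W ⟶ W, IsIso f ∨ IsIso (𝟙 W - f))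
    {T : Triangle C} (hT : IsARTriangle T)
    {n : ℕ} {Ys : Fin n → C} (hYs : ∀ i, Indec (Ys i)) (eY : T.obj₂ ≅ ⨁ Ys)
    (x : GreenGroup C) :
    homPairing (k := k) x (cls T.obj₁) - (∑ i, homPairing (k := k) x (cls (Ys i)))
      + homPairing (k := k) x (cls T.obj₃) =
    FreeAbelianGroup.coeff (clsOf T.obj₃ hT.2.2.1) x
      + FreeAbelianGroup.coeff (clsOf (T.obj₃⟦(-1:ℤ)⟧) (indec_shift hT.2.2.1 (-1))) x := by
  induction x using FreeAbelianGroup.induction_on with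
  | zero => simp
  | of s =>
    have hWs : Indec (Quotient.out s.val) := out_indec s
    have hs : s = clsOf (Quotient.out s.val) hWs := Subtype.ext (Quotient.out_eq s.val).symm
    have iff1 : Nonempty (Quotient.out s.val ≅ T.obj₃) ↔ s = clsOf T.obj₃ hT.2.2.1 := by
      constructor
      · rintro ⟨e⟩; exact hs.trans ((clsOf_eq_iff hWs hT.2.2.1).mpr ⟨e⟩)
      · intro h; exact (clsOf_eq_iff hWs hT.2.2.1).mp (hs.symm.trans h)
    have iff2 : Nonempty (Quotient.out s.val ≅ T.obj₃⟦(-1:ℤ)⟧) ↔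
        s = clsOf (T.obj₃⟦(-1:ℤ)⟧) (indec_shift hT.2.2.1 (-1)) := by
      constructor
      · rintro ⟨e⟩; exact hs.trans ((clsOf_eq_iff hWs _).mpr ⟨e⟩)
      · intro h; exact (clsOf_eq_iff hWs _).mp (hs.symm.trans h)
    have hsum : (∑ i, homPairing (k := k) (FreeAbelianGroup.of s) (cls (Ys i)))
        = (finrank k (Quotient.out s.val ⟶ T.obj₂) : ℤ) := by
      rw [Finset.sum_congr rfl (fun i _ => homPairing_of_cls s _ (hYs i))]
      rw [LinearEquiv.finrank_eq (Linear.homCongr k (Iso.refl (Quotient.out s.val)) eY),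
        finrank_hom_biproduct]
      push_cast
      rfl
    rw [homPairing_of_cls s _ hT.2.1, homPairing_of_cls s _ hT.2.2.1, hsum,
      dim_formula hKS1 hT hWs, coeff_of, coeff_of]
    congr 1
    · simp only [iff1]
    · simp only [iff2]
  | neg y ih =>
    simp only [map_neg, AddMonoidHom.neg_apply, Finset.sum_neg_distrib]
    linarith [ih]
  | add y z ihy ihz =>
    simp only [map_add, AddMonoidHom.add_apply, Finset.sum_add_distrib]
    linarith [ihy, ihz]


/-- if `C` has Auslander-Reiten triangles and every indecomposable
has infinite shift orbit, then the bilinear form `⟨[C],[D]⟩ = dim Hom(C,D)` on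
`A(C)` is non-degenerate. -/
theorem stmt5 (hKS : KrullSchmidt (C := C))
    (hAR : ∀ Z : C, Indec Z → ∃ T : Triangle C, IsARTriangle T ∧ Nonempty (T.obj₃ ≅ Z))
    (hinf : ∀ W : C, Indec W → ∀ i j : ℤ, Nonempty (W⟦i⟧ ≅ W⟦j⟧) → i = j)
    (x : GreenGroup C)
    (hx : ∀ D : C, Indec D → homPairing (k := k) x (cls D) = 0) :
    x = 0 := by
  have key : ∀ (Z : C) (hZ : Indec Z),
      FreeAbelianGroup.coeff (clsOf Z hZ) x
        + FreeAbelianGroup.coeff (clsOf (Z⟦(-1:ℤ)⟧) (indec_shift hZ (-1))) x = 0 := by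
    intro Z hZ
    obtain ⟨T, hT, ⟨eZ⟩⟩ := hAR Z hZ
    obtain ⟨n, Ys, hYs, ⟨eY⟩⟩ := hKS.2 T.obj₂
    have hp := pairing_zhat (k := k) hKS.1 hT hYs eY x
    rw [hx _ hT.2.1, hx _ hT.2.2.1] at hp
    rw [Finset.sum_congr rfl (fun i _ => hx _ (hYs i)), Finset.sum_const, smul_zero] at hp
    have e1 : clsOf T.obj₃ hT.2.2.1 = clsOf Z hZ := (clsOf_eq_iff _ _).mpr ⟨eZ⟩
    have e2 : clsOf (T.obj₃⟦(-1:ℤ)⟧) (indec_shift hT.2.2.1 (-1))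
        = clsOf (Z⟦(-1:ℤ)⟧) (indec_shift hZ (-1)) :=
      (clsOf_eq_iff _ _).mpr ⟨(shiftFunctor C (-1:ℤ)).mapIso eZ⟩
    rw [e1, e2] at hp
    omega
  have hall : ∀ t : IndecCls C, FreeAbelianGroup.coeff t x = 0 := by
    intro t
    by_contra hc0
    obtain ⟨W₀, hW₀, hq⟩ := t.2
    set c : ℤ → ℤ :=
      fun m => FreeAbelianGroup.coeff (clsOf (W₀⟦m⟧) (indec_shift hW₀ m)) x with hc
    have hstep : ∀ m : ℤ, c (m + (-1)) = - c m := by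
      intro m
      have hk := key (W₀⟦m⟧) (indec_shift hW₀ m)
      have ecl : clsOf ((W₀⟦m⟧)⟦(-1:ℤ)⟧) (indec_shift (indec_shift hW₀ m) (-1))
          = clsOf (W₀⟦m + (-1:ℤ)⟧) (indec_shift hW₀ (m + (-1))) :=
        (clsOf_eq_iff _ _).mpr ⟨(shiftAdd W₀ m (-1:ℤ)).symm⟩
      rw [ecl] at hk
      have hk2 : c m + c (m + (-1)) = 0 := hk
      linarith
    have ht0 : clsOf (W₀⟦(0:ℤ)⟧) (indec_shift hW₀ 0) = t := by
      apply Subtype.ext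
      show (⟦W₀⟦(0:ℤ)⟧⟧ : _root_.Quotient (CategoryTheory.isIsomorphicSetoid C)) = t.val
      rw [← hq]
      exact Quotient.sound ⟨(shiftZero ℤ W₀ : W₀⟦(0:ℤ)⟧ ≅ W₀)⟩
    have hc0' : c 0 ≠ 0 := by
      show FreeAbelianGroup.coeff (clsOf (W₀⟦(0:ℤ)⟧) (indec_shift hW₀ 0)) x ≠ 0
      rw [ht0]
      exact hc0
    have habs : ∀ nn : ℕ, c (-(nn:ℤ)) ≠ 0 := by
      intro nn
      induction nn with
      | zero => simpa using hc0'
      | succ m ih =>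
        have h1 : c ((-(m:ℤ)) + (-1)) = - c (-(m:ℤ)) := hstep _
        have h2 : (-((m+1 : ℕ):ℤ)) = (-(m:ℤ)) + (-1) := by push_cast; ring
        rw [h2, h1]
        simpa using ih
    have hmem : ∀ nn : ℕ,
        (clsOf (W₀⟦(-(nn:ℤ))⟧) (indec_shift hW₀ _)) ∈ x.support :=
      fun nn => (FreeAbelianGroup.mem_support_iff _ _).mpr (habs nn)
    have hinj : Function.Injective
        (fun nn : ℕ => (⟨clsOf (W₀⟦(-(nn:ℤ))⟧) (indec_shift hW₀ _), hmem nn⟩ : x.support)) := by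
      intro a b hab
      have hval : clsOf (W₀⟦(-(a:ℤ))⟧) (indec_shift hW₀ _)
          = clsOf (W₀⟦(-(b:ℤ))⟧) (indec_shift hW₀ _) := congrArg Subtype.val hab
      have := hinf W₀ hW₀ _ _ ((clsOf_eq_iff _ _).mp hval)
      omega
    haveI := Finite.of_injective _ hinj
    exact not_finite ℕ
  have hfin : FreeAbelianGroup.toFinsupp x = 0 := by
    ext t
    exact hall t
  calc x = Finsupp.toFreeAbelianGroup (FreeAbelianGroup.toFinsupp x) :=
      (Finsupp.toFreeAbelianGroup_toFinsupp x).symm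
  _ = 0 := by rw [hfin, map_zero]
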